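/- Let f : ℝ → ℝ be continuous on [a, x]. Then the iterated integral ∫_a^x ∫_a^{x_1} ⋯ ∫_a^{x_{m-1}} f(x_m) dx_m ⋯ dx_1 equals (1/(m-1)!) ∫_a^x (x - t)^{m-1} f(t) dt. -/

import Mathlib

open intervalIntegral

/-- `iterInt a f n` is the `n`-fold iterated integral of `f` with base point `a`. -/
noncomputable def iterInt (a : ℝ) (f : ℝ → ℝ) : ℕ → ℝ → ℝ
  | 0 => f
  | n + 1 => fun x => ∫ t in a..x, iterInt a f n t

section aux
variable (a : ℝ) (g : ℝ → ℝ) (hg : Continuous g)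

include hg in
lemma iterInt_cont (n : ℕ) : Continuous (iterInt a g n) := by
  induction n with
  | zero => exact hg
  | succ n ih =>
    exact intervalIntegral.continuous_primitive (fun u v => ih.intervalIntegrable u v) a

include hg in
/-- binomial expansion of the kernel integral -/
lemma kernel_expand (n : ℕ) (y : ℝ) :
    (∫ t in a..y, (y - t) ^ n * g t) =
      ∑ k ∈ Finset.range (n + 1),
        ((n.choose k : ℝ)) * (y ^ k * ∫ t in a..y, (-t) ^ (n - k) * g t) := by
  have step1 : (∫ t in a..y, (y - t) ^ n * g t) =
      ∫ t in a..y, ∑ k ∈ Finset.range (n + 1),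
        ((n.choose k : ℝ) * y ^ k) * ((-t) ^ (n - k) * g t) := by
    apply intervalIntegral.integral_congr
    intro t _
    show (y - t) ^ n * g t = _
    have h : (y - t) ^ n = (y + -t) ^ n := by ring_nf
    rw [h, add_pow, Finset.sum_mul]
    apply Finset.sum_congr rfl
    intro k _
    ring
  rw [step1, intervalIntegral.integral_finset_sum]
  · apply Finset.sum_congr rfl
    intro k _
    rw [intervalIntegral.integral_const_mul]
    ring
  · intro k _
    exact (continuous_const.mul (((continuous_neg).pow _).mul hg)).intervalIntegrable _ _

include hg in
lemma kernel_hasDerivAt (n : ℕ) (y : ℝ) :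
    HasDerivAt (fun u => ∫ t in a..u, (u - t) ^ (n + 1) * g t)
      (((n : ℝ) + 1) * ∫ t in a..y, (y - t) ^ n * g t) y := by
  have hc : ∀ k : ℕ, Continuous fun t : ℝ => (-t) ^ k * g t :=
    fun k => ((continuous_neg).pow _).mul hg
  have hfun : (fun u => ∫ t in a..u, (u - t) ^ (n + 1) * g t) =
      fun u => ∑ k ∈ Finset.range (n + 2),
        ((n+1).choose k : ℝ) * (u ^ k * ∫ t in a..u, (-t) ^ (n + 1 - k) * g t) := by
    funext u; exact kernel_expand a g hg (n + 1) u
  rw [hfun]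
  have hterm : ∀ k ∈ Finset.range (n + 2),
      HasDerivAt (fun u => ((n+1).choose k : ℝ) *
          (u ^ k * ∫ t in a..u, (-t) ^ (n + 1 - k) * g t))
        (((n+1).choose k : ℝ) *
          ((k : ℝ) * y ^ (k - 1) * (∫ t in a..y, (-t) ^ (n + 1 - k) * g t)
            + y ^ k * ((-y) ^ (n + 1 - k) * g y))) y := by
    intro k _
    have h1 : HasDerivAt (fun u : ℝ => u ^ k) ((k : ℝ) * y ^ (k - 1)) y :=
      hasDerivAt_pow k y
    have h2 : HasDerivAt (fun u => ∫ t in a..u, (-t) ^ (n + 1 - k) * g t)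
        ((-y) ^ (n + 1 - k) * g y) y :=
      ((hc (n + 1 - k)).integral_hasStrictDerivAt a y).hasDerivAt
    exact ((h1.mul h2).const_mul _)
  have hsum := HasDerivAt.fun_sum hterm
  refine hsum.congr_deriv ?_
  symm
  -- value equality
  have hsplit : ∑ k ∈ Finset.range (n + 2),
      ((n+1).choose k : ℝ) *
        ((k : ℝ) * y ^ (k - 1) * (∫ t in a..y, (-t) ^ (n + 1 - k) * g t)
          + y ^ k * ((-y) ^ (n + 1 - k) * g y))
      = (∑ k ∈ Finset.range (n + 2),
          ((n+1).choose k : ℝ) * ((k : ℝ) * y ^ (k - 1) *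
            (∫ t in a..y, (-t) ^ (n + 1 - k) * g t)))
        + (∑ k ∈ Finset.range (n + 2),
          y ^ k * (-y) ^ (n + 1 - k) * ((n+1).choose k : ℝ)) * g y := by
    rw [Finset.sum_mul, ← Finset.sum_add_distrib]
    apply Finset.sum_congr rfl
    intro k _; ring
  rw [hsplit, ← add_pow, add_neg_cancel, zero_pow (by omega), zero_mul, add_zero]
  -- first sum
  rw [Finset.sum_range_succ']
  simp only [Nat.cast_zero, zero_mul, mul_zero, add_zero, pow_zero]
  rw [kernel_expand a g hg n y, Finset.mul_sum]
  apply Finset.sum_congr rfl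
  intro k hk
  have hk' : k ≤ n := by simpa [Nat.lt_succ_iff] using hk
  have hch : ((n+1).choose (k+1) : ℝ) * ((k : ℝ) + 1) = ((n : ℝ) + 1) * (n.choose k : ℝ) := by
    have := Nat.add_one_mul_choose_eq n k
    have : ((Nat.succ n * n.choose k : ℕ) : ℝ) = ((Nat.choose (n+1) (k+1) * (k+1) : ℕ) : ℝ) := by
      exact_mod_cast congrArg (fun m : ℕ => (m : ℝ)) this
    push_cast at this
    linarith
  have hsub : n + 1 - (k + 1) = n - k := by omega
  rw [hsub]
  push_cast
  linear_combination (-(y ^ k * ∫ t in a..y, (-t) ^ (n - k) * g t)) * hch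

include hg in
lemma cauchy_global (n : ℕ) (y : ℝ) :
    iterInt a g (n + 1) y =
      (1 / (n.factorial : ℝ)) * ∫ t in a..y, (y - t) ^ n * g t := by
  induction n generalizing y with
  | zero =>
    simp [iterInt]
  | succ n ih =>
    set F : ℝ → ℝ := fun u => iterInt a g (n + 2) u -
      (1 / ((n+1).factorial : ℝ)) * ∫ t in a..u, (u - t) ^ (n + 1) * g t with hF
    have hL : ∀ u, HasDerivAt (fun v => iterInt a g (n + 2) v) (iterInt a g (n + 1) u) u := by
      intro u
      exact ((iterInt_cont a g hg (n + 1)).integral_hasStrictDerivAt a u).hasDerivAt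
    have hR : ∀ u, HasDerivAt
        (fun v => (1 / ((n+1).factorial : ℝ)) * ∫ t in a..v, (v - t) ^ (n + 1) * g t)
        (iterInt a g (n + 1) u) u := by
      intro u
      have h := (kernel_hasDerivAt a g hg n u).const_mul (1 / ((n+1).factorial : ℝ))
      have hval : (1 / ((n+1).factorial : ℝ)) *
          (((n : ℝ) + 1) * ∫ t in a..u, (u - t) ^ n * g t) = iterInt a g (n + 1) u := by
        rw [ih u]
        rw [Nat.factorial_succ]
        push_cast
        have h1 : ((n : ℝ) + 1) ≠ 0 := by positivity
        have h2 : ((n.factorial : ℝ)) ≠ 0 := by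
          exact_mod_cast Nat.cast_ne_zero.mpr n.factorial_ne_zero
        field_simp
      rw [← hval]
      exact h
    have hFd : ∀ u, HasDerivAt F 0 u := by
      intro u
      have := (hL u).sub (hR u)
      rw [sub_self] at this
      exact this
    have hconst : ∀ u v, F u = F v :=
      is_const_of_deriv_eq_zero (fun u => (hFd u).differentiableAt)
        (fun u => (hFd u).deriv)
    have ha : F a = 0 := by
      simp [hF, iterInt]
    have := hconst y a
    rw [ha] at this
    have : iterInt a g (n + 2) y =
        (1 / ((n+1).factorial : ℝ)) * ∫ t in a..y, (y - t) ^ (n + 1) * g t := by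
      have h := this
      simp only [hF] at h
      linarith
    exact this

end aux

lemma iterInt_congr (a x : ℝ) (f g : ℝ → ℝ) (hfg : ∀ t ∈ Set.Icc a x, f t = g t)
    (hax : a ≤ x) (n : ℕ) : ∀ y ∈ Set.Icc a x, iterInt a f n y = iterInt a g n y := by
  induction n with
  | zero => exact hfg
  | succ n ih =>
    intro y hy
    show (∫ t in a..y, iterInt a f n t) = ∫ t in a..y, iterInt a g n t
    apply intervalIntegral.integral_congr
    intro t ht
    have ht' : t ∈ Set.Icc a x := by
      rw [Set.uIcc_of_le hy.1] at ht
      exact ⟨ht.1, le_trans ht.2 hy.2⟩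
    exact ih t ht'

theorem cauchy_repeated_integration
    (m : ℕ) (hm : 1 ≤ m) (a x : ℝ) (hax : a < x) (f : ℝ → ℝ)
    (hf : ContinuousOn f (Set.Icc a x)) :
    iterInt a f m x =
      (1 / (m - 1).factorial : ℝ) * ∫ t in a..x, (x - t) ^ (m - 1) * f t := by
  obtain ⟨n, rfl⟩ : ∃ n, m = n + 1 := ⟨m - 1, by omega⟩
  -- extend f to a continuous function on ℝ
  obtain ⟨G, hG⟩ := ContinuousMap.exists_restrict_eq (Y := ℝ)
    (isClosed_Icc : IsClosed (Set.Icc a x)) ⟨(Set.Icc a x).restrict f, hf.restrict⟩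
  have hgf : ∀ t ∈ Set.Icc a x, f t = G t := by
    intro t ht
    have := congrFun (congrArg DFunLike.coe hG) ⟨t, ht⟩
    exact this.symm
  have hgc : Continuous (G : ℝ → ℝ) := G.continuous
  have h1 : iterInt a f (n + 1) x = iterInt a (G : ℝ → ℝ) (n + 1) x :=
    iterInt_congr a x f G hgf hax.le (n + 1) x ⟨hax.le, le_refl x⟩
  have h2 : (∫ t in a..x, (x - t) ^ n * f t) = ∫ t in a..x, (x - t) ^ n * G t := by
    apply intervalIntegral.integral_congr
    intro t ht
    rw [Set.uIcc_of_le hax.le] at ht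
    show (x - t) ^ n * f t = (x - t) ^ n * G t
    rw [hgf t ht]
  simp only [Nat.add_sub_cancel]
  rw [h1, h2]
  exact cauchy_global a (G : ℝ → ℝ) hgc n x
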